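/- Let a, b, c > 0 and α, β, γ > 1 with β < α·γ. Then there exists δ > 0 such that no point (x₁, x₂, x₃) ∈ (0, δ)³ satisfies simultaneously a·x₂ < x₁^α, b·x₂ > x₃^β, and c·x₁ < x₃^γ. -/

import Mathlib

theorem stmt_5 (a b c α β γ : ℝ) (ha : 0 < a) (hb : 0 < b) (hc : 0 < c)
    (hα : 1 < α) (hβ : 1 < β) (hγ : 1 < γ) (h : β < α * γ) :
    ∃ δ > 0, ¬ ∃ x₁ x₂ x₃ : ℝ,
      (0 < x₁ ∧ x₁ < δ) ∧ (0 < x₂ ∧ x₂ < δ) ∧ (0 < x₃ ∧ x₃ < δ) ∧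
      a * x₂ < x₁ ^ α ∧ b * x₂ > x₃ ^ β ∧ c * x₁ < x₃ ^ γ := by
  set e := α * γ - β with he
  have he0 : 0 < e := by simp only [he]; linarith
  have hca : (0 : ℝ) < c ^ α := Real.rpow_pos_of_pos hc α
  set K := a * c ^ α / b with hKdef
  have hK : 0 < K := by positivity
  refine ⟨K ^ (1 / e), Real.rpow_pos_of_pos hK _, ?_⟩
  rintro ⟨x₁, x₂, x₃, ⟨hx1, _⟩, ⟨hx2, _⟩, ⟨hx3, hx3d⟩, H1, H2, H3⟩
  have hx3g : (0 : ℝ) < x₃ ^ γ := Real.rpow_pos_of_pos hx3 γ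
  have h1 : x₁ < x₃ ^ γ / c := (lt_div_iff₀ hc).2 (by linarith [H3])
  have h2 : x₁ ^ α < (x₃ ^ γ / c) ^ α :=
    Real.rpow_lt_rpow hx1.le h1 (by linarith)
  have h3 : (x₃ ^ γ / c) ^ α = x₃ ^ (α * γ) / c ^ α := by
    rw [Real.div_rpow hx3g.le hc.le, mul_comm α γ, Real.rpow_mul hx3.le]
  rw [h3] at h2
  have h4 : a * x₂ * c ^ α < x₃ ^ (α * γ) := by
    have := mul_lt_mul_of_pos_right (lt_trans H1 h2) hca
    rwa [div_mul_cancel₀ _ hca.ne'] at this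
  have h5 : x₃ ^ β < b * x₂ := H2
  have key : a * c ^ α * x₃ ^ β < b * x₃ ^ (α * γ) := by
    nlinarith [mul_lt_mul_of_pos_left h5 (mul_pos ha hca), mul_lt_mul_of_pos_left h4 hb]
  have hsplit : x₃ ^ (α * γ) = x₃ ^ β * x₃ ^ e := by
    rw [← Real.rpow_add hx3, he]; ring_nf
  rw [hsplit] at key
  have hx3b : (0 : ℝ) < x₃ ^ β := Real.rpow_pos_of_pos hx3 β
  have h6 : a * c ^ α < b * x₃ ^ e := by nlinarith [key, hx3b]
  have h7 : x₃ ^ e < K := by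
    have := Real.rpow_lt_rpow hx3.le hx3d he0
    rwa [← Real.rpow_mul hK.le, one_div, inv_mul_cancel₀ he0.ne', Real.rpow_one] at this
  have : b * x₃ ^ e < a * c ^ α := by
    have h7' := mul_lt_mul_of_pos_left h7 hb
    have hbK : b * K = a * c ^ α := by rw [hKdef]; field_simp
    linarith
  linarith
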